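/- Let n ≥ 2, r0 > 0, 0 < β < 1, and C1 ≥ 0. Let u ∈ C²((r0,∞)) satisfy |u''(r) + (n−1)·β·r^{β−1}·u'(r)| ≤ C1 |u(r)| for all r > r0. If for every τ > 0 there is a constant C_τ such that |u(r)| ≤ C_τ e^{−τ r^{(4−β)/3}} for all r > r0, then u ≡ 0 on (r0+1, ∞). -/

import Mathlib

open MeasureTheory Filter Real Set Asymptotics

set_option maxHeartbeats 1000000 in
/-- The one-dimensional (radial) case of Corollary 6.4 a) of the paper, on warped
cylindrical ends with warping function σ(r) = e^{r^β}, 0 < β < 1: the radial Laplacian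
is L u = u'' + (n−1)·β·r^{β−1}·u'. -/
theorem stmt_12
    (n : ℕ) (hn : 2 ≤ n) (r0 : ℝ) (hr0 : 0 < r0)
    (β : ℝ) (hβ0 : 0 < β) (hβ1 : β < 1) (C1 : ℝ) (hC1 : 0 ≤ C1)
    (u : ℝ → ℝ) (hu : ContDiffOn ℝ 2 u (Ioi r0))
    (hineq : ∀ r ∈ Ioi r0,
      |deriv (deriv u) r + ((n : ℝ) - 1) * β * r ^ (β - 1) * deriv u r| ≤ C1 * |u r|)
    (hdecay : ∀ τ > (0 : ℝ), ∃ Cτ : ℝ, ∀ r ∈ Ioi r0,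
      |u r| ≤ Cτ * Real.exp (-τ * r ^ ((4 - β) / 3))) :
    ∀ r, r0 + 1 < r → u r = 0 := by
  have hopen : IsOpen (Ioi r0) := isOpen_Ioi
  have hd1 : ∀ x ∈ Ioi r0, DifferentiableAt ℝ u x := by
    intro x hx
    exact ((hu.differentiableOn (by norm_num)) x hx).differentiableAt (hopen.mem_nhds hx)
  have hdu : ContDiffOn ℝ 1 (deriv u) (Ioi r0) :=
    hu.deriv_of_isOpen hopen (by norm_num)
  have hd2 : ∀ x ∈ Ioi r0, DifferentiableAt ℝ (deriv u) x := by
    intro x hx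
    exact ((hdu.differentiableOn (by norm_num)) x hx).differentiableAt (hopen.mem_nhds hx)
  set A : ℝ := ((n : ℝ) - 1) * β * r0 ^ (β - 1) with hAdef
  have hn1 : (1 : ℝ) ≤ (n : ℝ) := by
    have : (2 : ℝ) ≤ (n : ℝ) := by exact_mod_cast hn
    linarith
  have hA0 : 0 ≤ A := by
    apply mul_nonneg (mul_nonneg (by linarith) hβ0.le) (Real.rpow_nonneg hr0.le _)
  set K : ℝ := 1 + C1 + 2 * A with hKdef
  have hK0 : 0 < K := by linarith
  set E : ℝ → ℝ := fun t => u t ^ 2 + deriv u t ^ 2 with hEdef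
  have hE0 : ∀ t, 0 ≤ E t := fun t => by positivity
  have hEderiv : ∀ x ∈ Ioi r0, HasDerivAt E
      (2 * u x * deriv u x + 2 * deriv u x * deriv (deriv u) x) x := by
    intro x hx
    have h1 := (hd1 x hx).hasDerivAt
    have h2 := (hd2 x hx).hasDerivAt
    have := (h1.fun_pow 2).fun_add (h2.fun_pow 2)
    exact this.congr_deriv (by norm_num)
  have hcoef : ∀ x ∈ Ioi r0, 0 ≤ ((n : ℝ) - 1) * β * x ^ (β - 1) ∧
      ((n : ℝ) - 1) * β * x ^ (β - 1) ≤ A := by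
    intro x hx
    have hx0 : (0 : ℝ) < x := lt_trans hr0 hx
    constructor
    · exact mul_nonneg (mul_nonneg (by linarith) hβ0.le) (Real.rpow_nonneg hx0.le _)
    · have h := Real.rpow_le_rpow_of_nonpos hr0 (le_of_lt hx) (by linarith : β - 1 ≤ 0)
      exact mul_le_mul_of_nonneg_left h (mul_nonneg (by linarith) hβ0.le)
  -- lower bound on E'
  have hElb : ∀ x ∈ Ioi r0,
      -(K * E x) ≤ 2 * u x * deriv u x + 2 * deriv u x * deriv (deriv u) x := by
    intro x hx
    obtain ⟨hc0, hcA⟩ := hcoef x hx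
    set a := u x
    set b := deriv u x
    set d := deriv (deriv u) x
    set c := ((n : ℝ) - 1) * β * x ^ (β - 1)
    have h := hineq x hx
    have habs : |b * (d + c * b)| ≤ |b| * (C1 * |a|) := by
      rw [abs_mul]
      exact mul_le_mul_of_nonneg_left h (abs_nonneg b)
    have hbb : -(|b| * (C1 * |a|)) ≤ b * (d + c * b) := (abs_le.mp habs).1
    have h1 : a ^ 2 = |a| ^ 2 := (sq_abs a).symm
    have h2 : b ^ 2 = |b| ^ 2 := (sq_abs b).symm
    have h3 : 0 ≤ C1 * (|a| - |b|) ^ 2 := mul_nonneg hC1 (sq_nonneg _)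
    have h4 : 0 ≤ (A - c) * b ^ 2 := mul_nonneg (by linarith) (sq_nonneg b)
    have h5 : 0 ≤ (a + b) ^ 2 := sq_nonneg _
    simp only [hEdef, hKdef]
    nlinarith [hbb, h3, h4, h5, sq_abs a, sq_abs b]
  set G : ℝ → ℝ := fun t => E t * Real.exp (K * t) with hGdef
  have hGderiv : ∀ x ∈ Ioi r0, HasDerivAt G
      ((2 * u x * deriv u x + 2 * deriv u x * deriv (deriv u) x + K * E x) *
        Real.exp (K * x)) x := by
    intro x hx
    have he : HasDerivAt (fun t => Real.exp (K * t)) (Real.exp (K * x) * K) x := by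
      have h0 : HasDerivAt (fun t : ℝ => K * t) K x := by
        simpa using (hasDerivAt_id x).const_mul K
      exact h0.exp
    have := (hEderiv x hx).fun_mul he
    exact this.congr_deriv (by ring)
  have hsub : Ici (r0 + 1) ⊆ Ioi r0 := fun x hx => lt_of_lt_of_le (by linarith : r0 < r0 + 1) hx
  have hmono : MonotoneOn G (Ici (r0 + 1)) := by
    apply monotoneOn_of_deriv_nonneg (convex_Ici _)
    · intro x hx
      exact ((hGderiv x (hsub hx)).differentiableAt.continuousAt).continuousWithinAt
    · intro x hx
      rw [interior_Ici] at hx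
      exact ((hGderiv x (hsub (mem_Ici.mpr (le_of_lt hx)))).differentiableAt).differentiableWithinAt
    · intro x hx
      rw [interior_Ici] at hx
      have hx' : x ∈ Ioi r0 := hsub (mem_Ici.mpr (le_of_lt hx))
      rw [(hGderiv x hx').deriv]
      have h := hElb x hx'
      have hexp : 0 ≤ Real.exp (K * x) := (Real.exp_pos _).le
      exact mul_nonneg (by linarith) hexp
  set p : ℝ := (4 - β) / 3 with hpdef
  have hp1 : 1 < p := by rw [hpdef]; linarith
  obtain ⟨Cτ, hCτ⟩ := hdecay K hK0
  intro r hr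
  have hrI : r ∈ Ioi r0 := by
    simp only [mem_Ioi]; linarith
  have hCτ0 : 0 ≤ Cτ := by
    have h := hCτ r hrI
    have he := Real.exp_pos (-K * r ^ p)
    nlinarith [abs_nonneg (u r)]
  -- key estimate for each s > r
  have key : ∀ s : ℝ, r < s →
      E r * Real.exp (K * r) ≤ 5 * Cτ ^ 2 * Real.exp (K * (s + 1) - 2 * K * s ^ p) := by
    intro s hs
    have hs0 : (0 : ℝ) < s := by linarith
    have hsI : ∀ t, s ≤ t → t ∈ Ioi r0 := by
      intro t ht; simp only [mem_Ioi]; linarith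
    -- mean value on [s, s+1]
    obtain ⟨ξ, hξmem, hξ⟩ := exists_deriv_eq_slope u (show s < s + 1 by linarith)
      (fun x hx => ((hd1 x (hsI x hx.1)).continuousAt).continuousWithinAt)
      (fun x hx => ((hd1 x (hsI x hx.1.le)).differentiableWithinAt))
    have hξs : s ≤ ξ := hξmem.1.le
    have hξs1 : ξ ≤ s + 1 := hξmem.2.le
    have hξ' : deriv u ξ = u (s + 1) - u s := by
      rw [hξ]; simp
    set D : ℝ := Cτ * Real.exp (-K * s ^ p) with hDdef
    have hD0 : 0 ≤ D := mul_nonneg hCτ0 (Real.exp_pos _).le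
    have hbound : ∀ t, s ≤ t → |u t| ≤ D := by
      intro t ht
      have h := hCτ t (hsI t ht)
      have hmono' : Real.exp (-K * t ^ p) ≤ Real.exp (-K * s ^ p) := by
        apply Real.exp_le_exp.mpr
        have : s ^ p ≤ t ^ p := Real.rpow_le_rpow hs0.le ht (by linarith)
        nlinarith
      calc |u t| ≤ Cτ * Real.exp (-K * t ^ p) := h
        _ ≤ D := mul_le_mul_of_nonneg_left hmono' hCτ0
    have hus : |u s| ≤ D := hbound s le_rfl
    have hus1 : |u (s + 1)| ≤ D := hbound (s + 1) (by linarith)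
    have huξ : |u ξ| ≤ D := hbound ξ hξs
    have hEξ : E ξ ≤ 5 * D ^ 2 := by
      have h1 : u ξ ^ 2 ≤ D ^ 2 :=
        sq_le_sq' (by linarith [neg_abs_le (u ξ)]) (by linarith [le_abs_self (u ξ)])
      have hd : |u (s + 1) - u s| ≤ 2 * D := by
        calc |u (s + 1) - u s| ≤ |u (s + 1)| + |u s| := abs_sub _ _
          _ ≤ 2 * D := by linarith
      have h2 : (u (s + 1) - u s) ^ 2 ≤ (2 * D) ^ 2 :=
        sq_le_sq' (by linarith [neg_abs_le (u (s + 1) - u s)])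
          (by linarith [le_abs_self (u (s + 1) - u s)])
      have hEξeq : E ξ = u ξ ^ 2 + (u (s + 1) - u s) ^ 2 := by
        simp only [hEdef]; rw [hξ']
      rw [hEξeq]
      nlinarith [hD0]
    have hGr : G r ≤ G ξ := by
      apply hmono (by simp only [mem_Ici]; linarith) (by simp only [mem_Ici]; linarith)
      linarith
    have hexpξ : Real.exp (K * ξ) ≤ Real.exp (K * (s + 1)) := by
      apply Real.exp_le_exp.mpr
      nlinarith
    calc E r * Real.exp (K * r) = G r := rfl
      _ ≤ G ξ := hGr
      _ = E ξ * Real.exp (K * ξ) := rfl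
      _ ≤ 5 * D ^ 2 * Real.exp (K * (s + 1)) := by
          apply mul_le_mul hEξ hexpξ (Real.exp_pos _).le (by positivity)
      _ = 5 * Cτ ^ 2 * (Real.exp (-K * s ^ p) * Real.exp (-K * s ^ p) * Real.exp (K * (s + 1))) := by
          rw [hDdef]; ring_nf
      _ = 5 * Cτ ^ 2 * Real.exp (-K * s ^ p + -K * s ^ p + K * (s + 1)) := by
          rw [← Real.exp_add, ← Real.exp_add]
      _ = 5 * Cτ ^ 2 * Real.exp (K * (s + 1) - 2 * K * s ^ p) := by
          congr 1
          ring
  -- take s → ∞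
  have htend : Tendsto (fun s : ℝ => 5 * Cτ ^ 2 * Real.exp (-(K * s))) atTop (nhds 0) := by
    have h1 : Tendsto (fun s : ℝ => K * s) atTop atTop :=
      Tendsto.const_mul_atTop hK0 tendsto_id
    have h2 : Tendsto (fun s : ℝ => -(K * s)) atTop atBot := tendsto_neg_atBot_iff.mpr h1
    have h3 := Real.tendsto_exp_atBot.comp h2
    have h4 := h3.const_mul (5 * Cτ ^ 2)
    simpa using h4
  have hev : ∀ᶠ s : ℝ in atTop,
      E r * Real.exp (K * r) ≤ 5 * Cτ ^ 2 * Real.exp (-(K * s)) := by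
    have hev2 : ∀ᶠ s : ℝ in atTop, (2 : ℝ) ≤ s ^ (p - 1) :=
      (tendsto_rpow_atTop (by linarith : (0:ℝ) < p - 1)).eventually_ge_atTop 2
    filter_upwards [eventually_gt_atTop r, eventually_ge_atTop (1:ℝ), hev2] with s h1 h3 h2
    have hs0 : (0:ℝ) < s := by linarith
    have hsp : s + 1 ≤ s ^ p := by
      have he := Real.rpow_add hs0 1 (p - 1)
      rw [Real.rpow_one, show 1 + (p - 1) = p by ring] at he
      rw [he]
      nlinarith
    refine le_trans (key s h1) ?_
    apply mul_le_mul_of_nonneg_left (Real.exp_le_exp.mpr ?_) (by positivity)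
    nlinarith [mul_le_mul_of_nonneg_left hsp hK0.le]
  have hfin : E r * Real.exp (K * r) ≤ 0 := ge_of_tendsto htend hev
  have hEr : E r ≤ 0 :=
    le_of_mul_le_mul_right (by rw [zero_mul]; exact hfin) (Real.exp_pos (K * r))
  have hur : u r ^ 2 = 0 := by
    have h1 : u r ^ 2 ≤ 0 := by
      have := sq_nonneg (deriv u r)
      simp only [hEdef] at hEr
      linarith
    exact le_antisymm h1 (sq_nonneg _)
  exact pow_eq_zero_iff (by norm_num) |>.mp hur
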